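/- Let p, m ∈ ℕ with p ≤ m, let I ⊆ ℝ be an open interval containing 0, and let f : I → ℂ be continuous. Then t ↦ t^p f(t) is of class C^m on I if and only if: (i) f is C^{m-p} on I, (ii) f restricted to I ∖ {0} is C^m, and (iii) for each 0 ≤ k ≤ p the limit lim_{t→0} t^k f^{(m-p+k)}(t) exists as a finite number. -/

import Mathlib

open Set Filter Topology

namespace Stmt8Aux

/-- On an open set, `iteratedDerivWithin` agrees with `iteratedDeriv`. -/
lemma itdW_open {s : Set ℝ} (hs : IsOpen s) (f : ℝ → ℂ) (n : ℕ) :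
    EqOn (iteratedDerivWithin n f s) (iteratedDeriv n f) s := by
  induction n with
  | zero => intro x hx; simp [iteratedDerivWithin_zero, iteratedDeriv_zero]
  | succ n ih =>
    intro x hx
    rw [iteratedDerivWithin_succ, iteratedDeriv_succ,
      derivWithin_of_isOpen hs hx]
    exact Filter.EventuallyEq.deriv_eq (Filter.eventuallyEq_of_mem (hs.mem_nhds hx) ih)

lemma cont_itd {s : Set ℝ} (hs : IsOpen s) {f : ℝ → ℂ} {N : ℕ} (hf : ContDiffOn ℝ N f s)
    {r : ℕ} (hr : r ≤ N) : ContinuousOn (iteratedDeriv r f) s :=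
  (hf.continuousOn_iteratedDerivWithin (by exact_mod_cast hr) hs.uniqueDiffOn).congr
    (itdW_open hs f r).symm

lemma hasDerivAt_itd {s : Set ℝ} (hs : IsOpen s) {f : ℝ → ℂ} {N r : ℕ} (hf : ContDiffOn ℝ N f s)
    (hr : r < N) {t : ℝ} (ht : t ∈ s) :
    HasDerivAt (iteratedDeriv r f) (iteratedDeriv (r + 1) f t) t := by
  have h1 : DifferentiableWithinAt ℝ (iteratedDerivWithin r f s) s t :=
    (hf.differentiableOn_iteratedDerivWithin (by exact_mod_cast hr) hs.uniqueDiffOn) t ht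
  have h2 : DifferentiableAt ℝ (iteratedDerivWithin r f s) t :=
    h1.differentiableAt (hs.mem_nhds ht)
  have h3 : DifferentiableAt ℝ (iteratedDeriv r f) t :=
    h2.congr_of_eventuallyEq
      (Filter.eventuallyEq_of_mem (hs.mem_nhds ht) (itdW_open hs f r)).symm
  rw [iteratedDeriv_succ]
  exact h3.hasDerivAt

lemma hasDerivAt_ofReal (t : ℝ) : HasDerivAt (fun x : ℝ => (x : ℂ)) 1 t := by
  simpa using (RCLike.ofRealCLM (K := ℂ)).hasDerivAt (x := t)

lemma contDiff_ofReal {n : WithTop ℕ∞} : ContDiff ℝ n (fun x : ℝ => (x : ℂ)) := by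
  have h : ContDiff ℝ n (RCLike.ofRealCLM (K := ℂ)) := ContinuousLinearMap.contDiff _
  simpa [RCLike.ofRealCLM_apply] using h

lemma hasDerivAt_ofReal_pow (n : ℕ) (t : ℝ) :
    HasDerivAt (fun x : ℝ => (x : ℂ) ^ n) ((n : ℂ) * (t : ℂ) ^ (n - 1)) t := by
  simpa using (hasDerivAt_pow n ((t : ℝ) : ℂ)).comp_ofReal


variable {a b : ℝ}

lemma Jopen (a b : ℝ) : IsOpen (Ioo a b \ {0}) :=
  isOpen_Ioo.sdiff isClosed_singleton

lemma Jpos (ha : a < 0) (hb : 0 < b) : Ioo (0:ℝ) b ⊆ Ioo a b \ {0} :=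
  fun x hx => ⟨⟨lt_trans ha hx.1, hx.2⟩, ne_of_gt hx.1⟩

lemma Jneg (ha : a < 0) (hb : 0 < b) : Ioo a (0:ℝ) ⊆ Ioo a b \ {0} :=
  fun x hx => ⟨⟨hx.1, lt_trans hx.2 hb⟩, ne_of_lt hx.2⟩

lemma nhdsJ_neBot (ha : a < 0) (hb : 0 < b) : (𝓝[Ioo a b \ {0}] (0:ℝ)).NeBot := by
  have h2 : 𝓝[Ioo (0:ℝ) b] (0:ℝ) = 𝓝[>] (0:ℝ) := nhdsWithin_Ioo_eq_nhdsGT hb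
  have h3 : 𝓝[Ioo (0:ℝ) b] (0:ℝ) ≤ 𝓝[Ioo a b \ {0}] (0:ℝ) := nhdsWithin_mono 0 (Jpos ha hb)
  haveI : (𝓝[Ioo (0:ℝ) b] (0:ℝ)).NeBot := by rw [h2]; infer_instance
  exact Filter.neBot_of_le h3

/-- If `v` is continuous on `(a,b)`, differentiable outside `0`, and its derivative converges
at `0`, then `v` is differentiable at `0` as well. -/
lemma hasDerivAt_zero_of_tendsto (ha : a < 0) (hb : 0 < b) {v : ℝ → ℂ} {L : ℂ}
    (hc : ContinuousOn v (Ioo a b))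
    (hd : DifferentiableOn ℝ v (Ioo a b \ {0}))
    (hl : Tendsto (deriv v) (𝓝[Ioo a b \ {0}] 0) (𝓝 L)) :
    HasDerivAt v L 0 := by
  have h0 : (0:ℝ) ∈ Ioo a b := ⟨ha, hb⟩
  have A : HasDerivWithinAt v L (Ici 0) 0 := by
    refine hasDerivWithinAt_Ici_of_tendsto_deriv (hd.mono (Jpos ha hb))
      ((hc 0 h0).mono fun x hx => ⟨lt_trans ha hx.1, hx.2⟩)
      (Ioo_mem_nhdsGT hb) ?_
    rw [← nhdsWithin_Ioo_eq_nhdsGT hb]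
    exact hl.mono_left (nhdsWithin_mono 0 (Jpos ha hb))
  have B : HasDerivWithinAt v L (Iic 0) 0 := by
    refine hasDerivWithinAt_Iic_of_tendsto_deriv (hd.mono (Jneg ha hb))
      ((hc 0 h0).mono fun x hx => ⟨hx.1, lt_trans hx.2 hb⟩)
      (Ioo_mem_nhdsLT ha) ?_
    rw [← nhdsWithin_Ioo_eq_nhdsLT ha]
    exact hl.mono_left (nhdsWithin_mono 0 (Jneg ha hb))
  have C : HasDerivWithinAt v L (Iic 0 ∪ Ici 0) 0 := B.union A
  rw [Iic_union_Ici] at C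
  exact hasDerivWithinAt_univ.mp C

/-- Stitching lemma: a function continuous on `(a,b)`, `C^n` off `0`, whose iterated
derivatives all converge at `0`, is `C^n` on `(a,b)`. -/
lemma stitch (ha : a < 0) (hb : 0 < b) :
    ∀ (n : ℕ) (v : ℝ → ℂ), ContinuousOn v (Ioo a b) →
      ContDiffOn ℝ n v (Ioo a b \ {0}) →
      (∀ r : ℕ, r ≤ n → ∃ L, Tendsto (iteratedDeriv r v) (𝓝[Ioo a b \ {0}] 0) (𝓝 L)) →
      ContDiffOn ℝ n v (Ioo a b) := by
  intro n
  induction n with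
  | zero => intro v hc _ _; exact contDiffOn_zero.mpr hc
  | succ n ih =>
    intro v hc hv hlim
    have hJ : IsOpen (Ioo a b \ {0}) := Jopen a b
    have hU : IsOpen (Ioo a b) := isOpen_Ioo
    have hv' : ContDiffOn ℝ ((n : WithTop ℕ∞) + 1) v (Ioo a b \ {0}) := by
      exact_mod_cast hv
    obtain ⟨hdiff, -, hderiv⟩ := (contDiffOn_succ_iff_deriv_of_isOpen hJ).mp hv'
    obtain ⟨L, hL⟩ := hlim 1 (by omega)
    rw [iteratedDeriv_one] at hL
    have hDA : HasDerivAt v L 0 := hasDerivAt_zero_of_tendsto ha hb hc hdiff hL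
    have hdiffU : DifferentiableOn ℝ v (Ioo a b) := by
      intro x hx
      by_cases hx0 : x = 0
      · subst hx0; exact hDA.differentiableAt.differentiableWithinAt
      · exact ((hdiff x ⟨hx, hx0⟩).differentiableAt
          (hJ.mem_nhds ⟨hx, hx0⟩)).differentiableWithinAt
    have hcd : ContinuousOn (deriv v) (Ioo a b) := by
      intro x hx
      by_cases hx0 : x = 0
      · subst hx0
        have hsub : Ioo a b ⊆ (Ioo a b \ {0}) ∪ {0} := by
          intro y hy
          by_cases hy0 : y = 0
          · exact Or.inr (by simp [hy0])
          · exact Or.inl ⟨hy, hy0⟩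
        have h1 : Tendsto (deriv v) (𝓝[(Ioo a b \ {0}) ∪ {0}] 0) (𝓝 L) := by
          rw [nhdsWithin_union]
          refine Filter.Tendsto.sup hL ?_
          rw [nhdsWithin_singleton]
          have : deriv v 0 = L := hDA.deriv
          rw [← this]
          exact tendsto_pure_nhds (deriv v) 0
        have : Tendsto (deriv v) (𝓝[Ioo a b] 0) (𝓝 L) :=
          h1.mono_left (nhdsWithin_mono 0 hsub)
        unfold ContinuousWithinAt
        rwa [hDA.deriv]
      · exact (((hderiv.continuousOn) x ⟨hx, hx0⟩).continuousAt
          (hJ.mem_nhds ⟨hx, hx0⟩)).continuousWithinAt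
    have hrec : ContDiffOn ℝ n (deriv v) (Ioo a b) := by
      refine ih (deriv v) hcd hderiv ?_
      intro r hr
      obtain ⟨L', hL'⟩ := hlim (r + 1) (by omega)
      rw [iteratedDeriv_succ'] at hL'
      exact ⟨L', hL'⟩
    have : ContDiffOn ℝ ((n : WithTop ℕ∞) + 1) v (Ioo a b) :=
      (contDiffOn_succ_iff_deriv_of_isOpen hU).mpr ⟨hdiffU, by simp, hrec⟩
    exact_mod_cast this

/-- Iterated derivative of `t * w t` on an open set. -/
lemma itd_mul {s : Set ℝ} (hs : IsOpen s) {w : ℝ → ℂ} {N : ℕ} (hw : ContDiffOn ℝ N w s) :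
    ∀ r : ℕ, r ≤ N → ∀ t ∈ s,
      iteratedDeriv r (fun t : ℝ => (t : ℂ) * w t) t
        = (t : ℂ) * iteratedDeriv r w t + (r : ℂ) * iteratedDeriv (r - 1) w t := by
  intro r
  induction r with
  | zero => intro _ t ht; simp
  | succ r ih =>
    intro hr t ht
    have hev : iteratedDeriv r (fun t : ℝ => (t : ℂ) * w t) =ᶠ[𝓝 t]
        (fun x : ℝ => (x : ℂ) * iteratedDeriv r w x + (r : ℂ) * iteratedDeriv (r - 1) w x) :=
      Filter.eventuallyEq_of_mem (hs.mem_nhds ht) (fun x hx => ih (by omega) x hx)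
    rw [iteratedDeriv_succ, hev.deriv_eq]
    have hw1 : HasDerivAt (iteratedDeriv r w) (iteratedDeriv (r + 1) w t) t :=
      hasDerivAt_itd hs hw (by omega) ht
    have hA : HasDerivAt (fun x : ℝ => (x : ℂ) * iteratedDeriv r w x)
        (1 * iteratedDeriv r w t + (t : ℂ) * iteratedDeriv (r + 1) w t) t :=
      (hasDerivAt_ofReal t).mul hw1
    have hB : HasDerivAt (fun x : ℝ => (r : ℂ) * iteratedDeriv (r - 1) w x)
        ((r : ℂ) * iteratedDeriv r w t) t := by
      cases r with
      | zero => simpa using hasDerivAt_const t (0 : ℂ)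
      | succ r' =>
        have := (hasDerivAt_itd hs hw (show r' < N by omega) ht).const_mul ((r' + 1 : ℕ) : ℂ)
        simpa using this
    have := HasDerivAt.deriv (f := fun x : ℝ => (x : ℂ) * iteratedDeriv r w x + (r : ℂ) * iteratedDeriv (r - 1) w x) (hA.add hB)
    rw [this]
    push_cast
    ring

/-- Multiplication step: if `w` is `C^n` on `(a,b)`, `C^{n+1}` off `0`, and `t * w^{(n+1)}(t)`
converges at `0`, then `t * w t` is `C^{n+1}` on `(a,b)`. -/
lemma mul_step (ha : a < 0) (hb : 0 < b) {w : ℝ → ℂ} {n : ℕ}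
    (hw1 : ContDiffOn ℝ n w (Ioo a b))
    (hw2 : ContDiffOn ℝ (n + 1) w (Ioo a b \ {0}))
    (hlim : ∃ L, Tendsto (fun t : ℝ => (t : ℂ) * iteratedDeriv (n + 1) w t)
      (𝓝[Ioo a b \ {0}] 0) (𝓝 L)) :
    ContDiffOn ℝ (n + 1) (fun t : ℝ => (t : ℂ) * w t) (Ioo a b) := by
  have hJ : IsOpen (Ioo a b \ {0}) := Jopen a b
  have hU : IsOpen (Ioo a b) := isOpen_Ioo
  refine stitch ha hb (n + 1) _ ?_ ?_ ?_
  · exact (Complex.continuous_ofReal.continuousOn).mul hw1.continuousOn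
  · exact (contDiff_ofReal.contDiffOn).mul hw2
  · intro r hr
    have hrw : ∀ t ∈ Ioo a b \ {0},
        iteratedDeriv r (fun t : ℝ => (t : ℂ) * w t) t
          = (t : ℂ) * iteratedDeriv r w t + (r : ℂ) * iteratedDeriv (r - 1) w t :=
      itd_mul hJ hw2 r hr
    have hee : (fun t : ℝ => (t : ℂ) * iteratedDeriv r w t + (r : ℂ) * iteratedDeriv (r - 1) w t)
        =ᶠ[𝓝[Ioo a b \ {0}] 0] iteratedDeriv r (fun t : ℝ => (t : ℂ) * w t) :=
      Filter.eventuallyEq_of_mem self_mem_nhdsWithin (fun x hx => (hrw x hx).symm)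
    rcases Nat.lt_or_ge r (n + 1) with hlt | hge
    · -- r ≤ n : all terms continuous on (a,b)
      have hr1 : r ≤ n := by omega
      have hc1 : ContinuousOn (iteratedDeriv r w) (Ioo a b) := cont_itd hU hw1 hr1
      have hc2 : ContinuousOn (iteratedDeriv (r - 1) w) (Ioo a b) := cont_itd hU hw1 (by omega)
      have h0 : (0:ℝ) ∈ Ioo a b := ⟨ha, hb⟩
      refine ⟨(0 : ℂ) * iteratedDeriv r w 0 + (r : ℂ) * iteratedDeriv (r - 1) w 0, ?_⟩
      refine Filter.Tendsto.congr' hee ?_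
      have t1 : Tendsto (fun t : ℝ => (t : ℂ)) (𝓝[Ioo a b \ {0}] 0) (𝓝 0) := by
        have := Complex.continuous_ofReal.continuousAt (x := (0:ℝ))
        simpa using this.continuousWithinAt.tendsto
      have t2 : Tendsto (iteratedDeriv r w) (𝓝[Ioo a b \ {0}] 0) (𝓝 (iteratedDeriv r w 0)) :=
        ((hc1 0 h0).mono diff_subset).tendsto
      have t3 : Tendsto (iteratedDeriv (r-1) w) (𝓝[Ioo a b \ {0}] 0)
          (𝓝 (iteratedDeriv (r-1) w 0)) := ((hc2 0 h0).mono diff_subset).tendsto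
      exact (t1.mul t2).add (tendsto_const_nhds.mul t3)
    · -- r = n + 1
      have hr1 : r = n + 1 := by omega
      subst hr1
      obtain ⟨L, hL⟩ := hlim
      have hc2 : ContinuousOn (iteratedDeriv n w) (Ioo a b) := cont_itd hU hw1 le_rfl
      have h0 : (0:ℝ) ∈ Ioo a b := ⟨ha, hb⟩
      refine ⟨L + ((n+1 : ℕ) : ℂ) * iteratedDeriv n w 0, ?_⟩
      refine Filter.Tendsto.congr' hee ?_
      have t3 : Tendsto (iteratedDeriv n w) (𝓝[Ioo a b \ {0}] 0)
          (𝓝 (iteratedDeriv n w 0)) := ((hc2 0 h0).mono diff_subset).tendsto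
      have := hL.add (tendsto_const_nhds (x := ((n+1 : ℕ) : ℂ)).mul t3)
      simpa using this

/-- Auxiliary sequence for the division lemma:
`NN u r t = r! * t^(r+1) * (d/dt)^r (u t / t)`. -/
noncomputable def NN (u : ℝ → ℂ) : ℕ → ℝ → ℂ
  | 0 => u
  | (r + 1) => fun t => iteratedDeriv (r + 1) u t * (t : ℂ) ^ (r + 1) - ((r : ℂ) + 1) * NN u r t

lemma NN_zero (u : ℝ → ℂ) : NN u 0 = u := rfl

lemma NN_succ (u : ℝ → ℂ) (r : ℕ) (t : ℝ) :
    NN u (r + 1) t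
      = iteratedDeriv (r + 1) u t * (t : ℂ) ^ (r + 1) - ((r : ℂ) + 1) * NN u r t := rfl

lemma NN_zero_val {u : ℝ → ℂ} (hu0 : u 0 = 0) : ∀ r, NN u r 0 = 0 := by
  intro r
  induction r with
  | zero => simpa [NN_zero]
  | succ r ih => simp [NN_succ, ih]

lemma NN_hasDerivAt (ha : a < 0) (hb : 0 < b) {u : ℝ → ℂ} {k : ℕ}
    (hu : ContDiffOn ℝ (k + 1 : ℕ) u (Ioo a b)) :
    ∀ r ≤ k, ∀ t ∈ Ioo a b,
      HasDerivAt (NN u r) (iteratedDeriv (r + 1) u t * (t : ℂ) ^ r) t := by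
  have hU : IsOpen (Ioo a b) := isOpen_Ioo
  intro r
  induction r with
  | zero =>
    intro _ t ht
    have h := hasDerivAt_itd hU hu (show 0 < k + 1 by omega) ht
    have h0 : iteratedDeriv 0 u = u := by funext x; simp
    rw [h0] at h
    show HasDerivAt u (iteratedDeriv (0 + 1) u t * (t : ℂ) ^ 0) t
    rw [pow_zero, mul_one]
    exact h
  | succ r ih =>
    intro hr t ht
    have h1 : HasDerivAt (fun x : ℝ => iteratedDeriv (r + 1) u x * (x : ℂ) ^ (r + 1))
        (iteratedDeriv (r + 2) u t * (t : ℂ) ^ (r + 1)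
          + iteratedDeriv (r + 1) u t * (((r + 1 : ℕ) : ℂ) * (t : ℂ) ^ r)) t := by
      have := (hasDerivAt_itd hU hu (show r + 1 < k + 1 by omega) ht).mul
        (hasDerivAt_ofReal_pow (r + 1) t)
      rw [Nat.add_sub_cancel] at this
      exact this
    have h2 : HasDerivAt (fun x : ℝ => ((r : ℂ) + 1) * NN u r x)
        (((r : ℂ) + 1) * (iteratedDeriv (r + 1) u t * (t : ℂ) ^ r)) t :=
      (ih (by omega) t ht).const_mul _
    have h3 := h1.sub h2
    have : iteratedDeriv (r + 2) u t * (t : ℂ) ^ (r + 1)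
          + iteratedDeriv (r + 1) u t * (((r + 1 : ℕ) : ℂ) * (t : ℂ) ^ r)
          - ((r : ℂ) + 1) * (iteratedDeriv (r + 1) u t * (t : ℂ) ^ r)
        = iteratedDeriv (r + 1 + 1) u t * (t : ℂ) ^ (r + 1) := by
      push_cast
      ring_nf
    rw [this] at h3
    exact h3

lemma NN_formula (ha : a < 0) (hb : 0 < b) {u : ℝ → ℂ} {k : ℕ}
    (hu : ContDiffOn ℝ (k + 1 : ℕ) u (Ioo a b))
    {w : ℝ → ℂ} (hwe : ∀ t ∈ Ioo a b \ {0}, w t = u t / (t : ℂ)) :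
    ∀ r ≤ k, ∀ t ∈ Ioo a b \ {0},
      iteratedDeriv r w t = NN u r t / (t : ℂ) ^ (r + 1) := by
  have hJ : IsOpen (Ioo a b \ {0}) := Jopen a b
  intro r
  induction r with
  | zero =>
    intro _ t ht
    simpa [NN_zero] using hwe t ht
  | succ r ih =>
    intro hr t ht
    have htne : (t : ℂ) ≠ 0 := Complex.ofReal_ne_zero.mpr ht.2
    have hev : iteratedDeriv r w =ᶠ[𝓝 t] fun x : ℝ => NN u r x / (x : ℂ) ^ (r + 1) :=
      Filter.eventuallyEq_of_mem (hJ.mem_nhds ht) (fun x hx => ih (by omega) x hx)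
    rw [iteratedDeriv_succ, hev.deriv_eq]
    have hden : ((t : ℂ)) ^ (r + 1) ≠ 0 := pow_ne_zero _ htne
    have hdiv := ((NN_hasDerivAt ha hb hu r (by omega) t ht.1).div
      (hasDerivAt_ofReal_pow (r + 1) t) hden)
    rw [HasDerivAt.deriv (f := fun x : ℝ => NN u r x / (x : ℂ) ^ (r + 1)) hdiv]
    rw [NN_succ]
    have h1 : ((r + 1 : ℕ) : ℂ) * (t : ℂ) ^ (r + 1 - 1) = ((r : ℂ) + 1) * (t : ℂ) ^ r := by
      push_cast; ring_nf
    rw [h1]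
    field_simp
    ring

lemma NN_tendsto (ha : a < 0) (hb : 0 < b) {u : ℝ → ℂ} {k : ℕ}
    (hu : ContDiffOn ℝ (k + 1 : ℕ) u (Ioo a b)) (hu0 : u 0 = 0) :
    ∀ r ≤ k, Tendsto (fun t : ℝ => NN u r t / (t : ℂ) ^ (r + 1)) (𝓝[Ioo a b \ {0}] 0)
      (𝓝 (iteratedDeriv (r + 1) u 0 / ((r : ℂ) + 1))) := by
  have hU : IsOpen (Ioo a b) := isOpen_Ioo
  have h0 : (0:ℝ) ∈ Ioo a b := ⟨ha, hb⟩
  intro r hr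
  set G : ℝ → ℂ := iteratedDeriv (r + 1) u with hG
  have hGc : ContinuousOn G (Ioo a b) := cont_itd hU hu (by omega)
  have hrc : ((r : ℂ) + 1) ≠ 0 := by
    have : ((r + 1 : ℕ) : ℂ) ≠ 0 := Nat.cast_ne_zero.mpr (Nat.succ_ne_zero r)
    push_cast at this; exact this
  rw [Metric.tendsto_nhdsWithin_nhds]
  intro ε hε
  obtain ⟨δ, hδ, hδe⟩ := Metric.continuousWithinAt_iff.mp (hGc 0 h0) (ε / 2) (by linarith)
  refine ⟨δ, hδ, ?_⟩
  intro t ht hdist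
  have htU : t ∈ Ioo a b := ht.1
  have htne : t ≠ 0 := ht.2
  have htcne : (t : ℂ) ≠ 0 := Complex.ofReal_ne_zero.mpr htne
  have hsub : uIcc (0:ℝ) t ⊆ Ioo a b := (Set.ordConnected_Ioo).uIcc_subset h0 htU
  have habs : |t| < δ := by rwa [Real.dist_eq, sub_zero] at hdist
  -- FTC representation of `NN u r`
  have hcont1 : ContinuousOn (fun s : ℝ => G s * (s : ℂ) ^ r) (uIcc (0:ℝ) t) :=
    (hGc.mono hsub).mul ((Complex.continuous_ofReal.pow r).continuousOn)
  have hint1 : IntervalIntegrable (fun s : ℝ => G s * (s : ℂ) ^ r) MeasureTheory.volume 0 t :=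
    hcont1.intervalIntegrable
  have hFTC1 : ∫ s in (0:ℝ)..t, G s * (s : ℂ) ^ r = NN u r t := by
    have := intervalIntegral.integral_eq_sub_of_hasDerivAt
      (f := NN u r) (f' := fun s : ℝ => G s * (s : ℂ) ^ r)
      (fun x hx => NN_hasDerivAt ha hb hu r hr x (hsub hx)) hint1
    rw [this, NN_zero_val hu0, sub_zero]
  -- FTC for the polynomial part
  have hP : ∀ x : ℝ, HasDerivAt (fun x : ℝ => G 0 * (x : ℂ) ^ (r + 1) / ((r : ℂ) + 1))
      (G 0 * (x : ℂ) ^ r) x := by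
    intro x
    have h1 := ((hasDerivAt_ofReal_pow (r + 1) x).const_mul (G 0)).div_const ((r : ℂ) + 1)
    have h2 : G 0 * (((r + 1 : ℕ) : ℂ) * (x : ℂ) ^ (r + 1 - 1)) / ((r : ℂ) + 1)
        = G 0 * (x : ℂ) ^ r := by
      push_cast
      field_simp
    rwa [h2] at h1
  have hint2 : IntervalIntegrable (fun s : ℝ => G 0 * (s : ℂ) ^ r) MeasureTheory.volume 0 t :=
    (continuousOn_const.mul ((Complex.continuous_ofReal.pow r).continuousOn)).intervalIntegrable
  have hFTC2 : ∫ s in (0:ℝ)..t, G 0 * (s : ℂ) ^ r = G 0 * (t : ℂ) ^ (r + 1) / ((r : ℂ) + 1) := by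
    have := intervalIntegral.integral_eq_sub_of_hasDerivAt
      (f := fun x : ℝ => G 0 * (x : ℂ) ^ (r + 1) / ((r : ℂ) + 1))
      (f' := fun s : ℝ => G 0 * (s : ℂ) ^ r) (fun x _ => hP x) hint2
    rw [this]
    simp
  have hdiffint : NN u r t - G 0 * (t : ℂ) ^ (r + 1) / ((r : ℂ) + 1)
      = ∫ s in (0:ℝ)..t, (G s - G 0) * (s : ℂ) ^ r := by
    have : (fun s : ℝ => (G s - G 0) * (s : ℂ) ^ r)
        = fun s : ℝ => G s * (s : ℂ) ^ r - G 0 * (s : ℂ) ^ r := by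
      funext s; ring
    rw [this, intervalIntegral.integral_sub hint1 hint2, hFTC1, hFTC2]
  -- bound the integral
  have hbound : ‖∫ s in (0:ℝ)..t, (G s - G 0) * (s : ℂ) ^ r‖ ≤ (ε / 2 * |t| ^ r) * |t - 0| := by
    apply intervalIntegral.norm_integral_le_of_norm_le_const
    intro x hx
    have hx' : x ∈ uIcc (0:ℝ) t := uIoc_subset_uIcc hx
    have hxabs : |x| ≤ |t| := by
      rcases Set.mem_uIcc.mp hx' with ⟨h1, h2⟩ | ⟨h1, h2⟩
      · rw [abs_of_nonneg h1, abs_of_nonneg (h1.trans h2)]; exact h2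
      · rw [abs_of_nonpos h2, abs_of_nonpos (h1.trans h2)]; linarith
    have hxU : x ∈ Ioo a b := hsub hx'
    have hxd : dist x 0 < δ := by
      rw [Real.dist_eq, sub_zero]; exact lt_of_le_of_lt hxabs habs
    have hGx : ‖G x - G 0‖ < ε / 2 := by
      have := hδe hxU hxd
      rwa [dist_eq_norm] at this
    rw [norm_mul, norm_pow, Complex.norm_real]
    have h1 : ‖G x - G 0‖ * |x| ^ r ≤ (ε / 2) * |t| ^ r := by
      apply mul_le_mul hGx.le (pow_le_pow_left₀ (abs_nonneg x) hxabs r)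
        (pow_nonneg (abs_nonneg x) r) (by linarith)
    exact h1
  rw [sub_zero] at hbound
  -- conclude
  have hM : ‖NN u r t - G 0 * (t : ℂ) ^ (r + 1) / ((r : ℂ) + 1)‖ ≤ ε / 2 * |t| ^ (r + 1) := by
    rw [hdiffint]
    calc ‖∫ s in (0:ℝ)..t, (G s - G 0) * (s : ℂ) ^ r‖ ≤ (ε / 2 * |t| ^ r) * |t| := hbound
    _ = ε / 2 * |t| ^ (r + 1) := by ring
  have hq : NN u r t / (t : ℂ) ^ (r + 1) - G 0 / ((r : ℂ) + 1)
      = (NN u r t - G 0 * (t : ℂ) ^ (r + 1) / ((r : ℂ) + 1)) / (t : ℂ) ^ (r + 1) := by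
    field_simp
  rw [dist_eq_norm, hq, norm_div, norm_pow, Complex.norm_real, Real.norm_eq_abs]
  have htpos : (0:ℝ) < |t| ^ (r + 1) := pow_pos (abs_pos.mpr htne) (r + 1)
  rw [div_lt_iff₀ htpos]
  calc ‖NN u r t - G 0 * (t : ℂ) ^ (r + 1) / ((r : ℂ) + 1)‖ ≤ ε / 2 * |t| ^ (r + 1) := hM
  _ < ε * |t| ^ (r + 1) := by
      have : (0:ℝ) < ε := hε
      nlinarith

/-- Division lemma: if `u` is `C^{k+1}` on `(a,b)` with `u 0 = 0`, then any continuous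
function agreeing with `u t / t` off `0` is `C^k` on `(a,b)`. -/
lemma div_lemma (ha : a < 0) (hb : 0 < b) {u : ℝ → ℂ} {k : ℕ}
    (hu : ContDiffOn ℝ (k + 1 : ℕ) u (Ioo a b)) (hu0 : u 0 = 0)
    {w : ℝ → ℂ} (hwc : ContinuousOn w (Ioo a b))
    (hwe : ∀ t ∈ Ioo a b \ {0}, w t = u t / (t : ℂ)) :
    ContDiffOn ℝ k w (Ioo a b) := by
  refine stitch ha hb k w hwc ?_ ?_
  · have hnum : ContDiffOn ℝ (k : ℕ) u (Ioo a b \ {0}) :=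
      (hu.of_le (by exact_mod_cast Nat.le_succ k)).mono diff_subset
    have hden : ContDiffOn ℝ (k : ℕ) (fun t : ℝ => (t : ℂ)) (Ioo a b \ {0}) :=
      contDiff_ofReal.contDiffOn
    have hdiv : ContDiffOn ℝ (k : ℕ) (fun t : ℝ => u t * ((t : ℂ))⁻¹) (Ioo a b \ {0}) :=
      hnum.mul (hden.inv (fun x hx => Complex.ofReal_ne_zero.mpr hx.2))
    exact hdiv.congr (fun x hx => by rw [hwe x hx, div_eq_mul_inv])
  · intro r hr
    refine ⟨iteratedDeriv (r + 1) u 0 / ((r : ℂ) + 1), ?_⟩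
    refine (NN_tendsto ha hb hu hu0 r hr).congr' ?_
    exact Filter.eventuallyEq_of_mem self_mem_nhdsWithin
      (fun x hx => (NN_formula ha hb hu hwe r hr x hx).symm)

/-- Iterated division: if `t^p * f t` is `C^{p+n}` and `f` is continuous, then `f` is `C^n`. -/
lemma div_pow (ha : a < 0) (hb : 0 < b) :
    ∀ (p : ℕ) (n : ℕ) (f : ℝ → ℂ), ContinuousOn f (Ioo a b) →
      ContDiffOn ℝ (p + n : ℕ) (fun t : ℝ => (t : ℂ) ^ p * f t) (Ioo a b) →
      ContDiffOn ℝ n f (Ioo a b) := by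
  intro p
  induction p with
  | zero =>
    intro n f _ h
    have : (fun t : ℝ => (t : ℂ) ^ 0 * f t) = f := by funext t; simp
    rw [this] at h
    simpa using h
  | succ p ih =>
    intro n f hf h
    have key : ContDiffOn ℝ (p + n : ℕ) (fun t : ℝ => (t : ℂ) ^ p * f t) (Ioo a b) := by
      refine div_lemma ha hb (u := fun t : ℝ => (t : ℂ) ^ (p + 1) * f t) (k := p + n)
        ?_ (by simp) ?_ ?_
      · have : p + n + 1 = p + 1 + n := by omega
        rw [this]
        exact h
      · exact ((Complex.continuous_ofReal.pow p).continuousOn).mul hf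
      · intro t ht
        have htne : (t : ℂ) ≠ 0 := Complex.ofReal_ne_zero.mpr ht.2
        field_simp
        ring
    exact ih n f hf key

end Stmt8Aux

open Stmt8Aux in
/-- Characterization of `ₚC^m`-functions: let `p ≤ m`, let `I = (a,b)` be an open interval
containing `0`, and let `f : I → ℂ` be continuous. Then `t ↦ t^p f t` is `C^m` on `I` if and
only if (i) `f` is `C^{m-p}` on `I`, (ii) `f` is `C^m` on `I ∖ {0}`, and (iii) for each
`0 ≤ k ≤ p` the limit of `t^k f^{(m-p+k)}(t)` as `t → 0` (within `I ∖ {0}`) exists finitely. -/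
theorem stmt8 (p m : ℕ) (hpm : p ≤ m)
    (a b : ℝ) (ha : a < 0) (hb : 0 < b)
    (f : ℝ → ℂ) (hf : ContinuousOn f (Ioo a b)) :
    ContDiffOn ℝ m (fun t : ℝ => (t : ℂ) ^ p * f t) (Ioo a b) ↔
      (ContDiffOn ℝ (m - p : ℕ) f (Ioo a b) ∧
       ContDiffOn ℝ m f (Ioo a b \ {0}) ∧
       ∀ k ≤ p, ∃ L : ℂ, Tendsto
         (fun t : ℝ => (t : ℂ) ^ k * iteratedDerivWithin (m - p + k) f (Ioo a b \ {0}) t)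
         (nhdsWithin 0 (Ioo a b \ {0})) (nhds L)) := by
  have hJ : IsOpen (Ioo a b \ {0}) := Stmt8Aux.Jopen a b
  have hU : IsOpen (Ioo a b) := isOpen_Ioo
  have h0 : (0:ℝ) ∈ Ioo a b := ⟨ha, hb⟩
  constructor
  · -- forward direction
    intro hg
    -- (ii)
    have hf2 : ContDiffOn ℝ m f (Ioo a b \ {0}) := by
      have h1 : ContDiffOn ℝ m
          (fun t : ℝ => ((t : ℂ) ^ p * f t) * (((t : ℂ) ^ p))⁻¹) (Ioo a b \ {0}) :=
        (hg.mono diff_subset).mul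
          (((Stmt8Aux.contDiff_ofReal.pow p).contDiffOn).inv
            (fun x hx => pow_ne_zero _ (Complex.ofReal_ne_zero.mpr hx.2)))
      refine h1.congr (fun x hx => ?_)
      have hx0 : ((x : ℂ)) ^ p ≠ 0 := pow_ne_zero _ (Complex.ofReal_ne_zero.mpr hx.2)
      field_simp
    -- intermediate regularity
    have hφ : ∀ j, j ≤ p → ContDiffOn ℝ ((m - j : ℕ))
        (fun t : ℝ => (t : ℂ) ^ (p - j) * f t) (Ioo a b) := by
      intro j hj
      refine Stmt8Aux.div_pow ha hb j (m - j) _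
        (((Complex.continuous_ofReal.pow (p - j)).continuousOn).mul hf) ?_
      have harith : j + (m - j) = m := by omega
      have hfun : (fun t : ℝ => (t : ℂ) ^ j * ((t : ℂ) ^ (p - j) * f t))
          = fun t : ℝ => (t : ℂ) ^ p * f t := by
        funext t
        rw [← mul_assoc, ← pow_add]
        congr 2
        omega
      rw [harith, hfun]
      exact hg
    -- (i)
    have hf1 : ContDiffOn ℝ ((m - p : ℕ)) f (Ioo a b) := by
      have h1 := hφ p le_rfl
      have hfun : (fun t : ℝ => (t : ℂ) ^ (p - p) * f t) = f := by
        funext t; simp [Nat.sub_self]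
      rwa [hfun] at h1
    refine ⟨hf1, hf2, ?_⟩
    -- (iii)
    have hP : ∀ q, q ≤ p → ∀ k, k ≤ q → ∃ L : ℂ, Tendsto
        (fun t : ℝ => (t : ℂ) ^ k *
          iteratedDeriv (m - q + k) (fun t : ℝ => (t : ℂ) ^ (p - q) * f t) t)
        (𝓝[Ioo a b \ {0}] 0) (𝓝 L) := by
      intro q
      induction q with
      | zero =>
        intro _ k hk
        have hk0 : k = 0 := by omega
        subst hk0
        have hg0 : ContDiffOn ℝ m (fun t : ℝ => (t : ℂ) ^ (p - 0) * f t) (Ioo a b) := by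
          have heq : (fun t : ℝ => (t : ℂ) ^ (p - 0) * f t)
              = fun t : ℝ => (t : ℂ) ^ p * f t := by norm_num
          rw [heq]; exact hg
        have hcont : ContinuousOn
            (iteratedDeriv m (fun t : ℝ => (t : ℂ) ^ (p - 0) * f t)) (Ioo a b) :=
          Stmt8Aux.cont_itd hU hg0 le_rfl
        refine ⟨iteratedDeriv m (fun t : ℝ => (t : ℂ) ^ (p - 0) * f t) 0, ?_⟩
        have ht : Tendsto (iteratedDeriv m (fun t : ℝ => (t : ℂ) ^ (p - 0) * f t))
            (𝓝[Ioo a b \ {0}] 0)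
            (𝓝 (iteratedDeriv m (fun t : ℝ => (t : ℂ) ^ (p - 0) * f t) 0)) :=
          ((hcont 0 h0).mono diff_subset).tendsto
        have harith : m - 0 + 0 = m := by omega
        rw [harith]
        refine ht.congr (fun x => ?_)
        simp
      | succ q ihq =>
        intro hq1 k
        induction k with
        | zero =>
          intro _
          have hcont : ContinuousOn
              (iteratedDeriv (m - (q+1)) (fun t : ℝ => (t : ℂ) ^ (p - (q+1)) * f t))
              (Ioo a b) :=
            Stmt8Aux.cont_itd hU (hφ (q+1) hq1) le_rfl
          refine ⟨iteratedDeriv (m - (q+1)) (fun t : ℝ => (t : ℂ) ^ (p - (q+1)) * f t) 0, ?_⟩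
          have ht : Tendsto (iteratedDeriv (m - (q+1)) (fun t : ℝ => (t : ℂ) ^ (p - (q+1)) * f t))
              (𝓝[Ioo a b \ {0}] 0)
              (𝓝 (iteratedDeriv (m - (q+1)) (fun t : ℝ => (t : ℂ) ^ (p - (q+1)) * f t) 0)) :=
            ((hcont 0 h0).mono diff_subset).tendsto
          have harith : m - (q+1) + 0 = m - (q+1) := by omega
          rw [harith]
          refine ht.congr (fun x => ?_)
          simp
        | succ k ihk =>
          intro hk1
          obtain ⟨L1, hL1⟩ := ihq (by omega) k (by omega)
          obtain ⟨L2, hL2⟩ := ihk (by omega)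
          set r : ℕ := m - (q+1) + (k+1) with hr
          have hfeq : (fun t : ℝ => (t : ℂ) ^ (p - q) * f t)
              = (fun t : ℝ => (t : ℂ) * ((t : ℂ) ^ (p - (q+1)) * f t)) := by
            funext t
            rw [← mul_assoc, ← pow_succ']
            congr 2
            omega
          rw [show m - q + k = r from by omega, hfeq] at hL1
          rw [show m - (q+1) + k = r - 1 from by omega] at hL2
          have hw : ContDiffOn ℝ m (fun t : ℝ => (t : ℂ) ^ (p - (q+1)) * f t)
              (Ioo a b \ {0}) :=
            ((Stmt8Aux.contDiff_ofReal.pow (p - (q+1))).contDiffOn).mul hf2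
          have hid := Stmt8Aux.itd_mul hJ hw r (by omega)
          refine ⟨L1 - (r : ℂ) * L2, ?_⟩
          refine Filter.Tendsto.congr' ?_ (hL1.sub (hL2.const_mul ((r : ℕ) : ℂ)))
          refine Filter.eventuallyEq_of_mem self_mem_nhdsWithin (fun x hx => ?_)
          rw [hid x hx]
          push_cast
          ring
    intro k hk
    obtain ⟨L, hL⟩ := hP p le_rfl k hk
    have hfun : (fun t : ℝ => (t : ℂ) ^ (p - p) * f t) = f := by
      funext t; simp [Nat.sub_self]
    rw [hfun] at hL
    refine ⟨L, hL.congr' ?_⟩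
    refine Filter.eventuallyEq_of_mem self_mem_nhdsWithin (fun x hx => ?_)
    rw [Stmt8Aux.itdW_open hJ f (m - p + k) hx]
  · -- backward direction
    rintro ⟨h1, h2, h3⟩
    have h3' : ∀ k, k ≤ p → ∃ L : ℂ, Tendsto
        (fun t : ℝ => (t : ℂ) ^ k * iteratedDeriv (m - p + k) f t)
        (𝓝[Ioo a b \ {0}] 0) (𝓝 L) := by
      intro k hk
      obtain ⟨L, hL⟩ := h3 k hk
      refine ⟨L, hL.congr' ?_⟩
      refine Filter.eventuallyEq_of_mem self_mem_nhdsWithin (fun x hx => ?_)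
      rw [Stmt8Aux.itdW_open hJ f (m - p + k) hx]
    set S : ℕ → Prop := fun q =>
      ContDiffOn ℝ ((m - q : ℕ)) (fun t : ℝ => (t : ℂ) ^ (p - q) * f t) (Ioo a b) ∧
      ∀ k, k ≤ q → ∃ L : ℂ, Tendsto
        (fun t : ℝ => (t : ℂ) ^ k *
          iteratedDeriv (m - q + k) (fun t : ℝ => (t : ℂ) ^ (p - q) * f t) t)
        (𝓝[Ioo a b \ {0}] 0) (𝓝 L) with hS
    have hSp : S p := by
      constructor
      · have hfun : (fun t : ℝ => (t : ℂ) ^ (p - p) * f t) = f := by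
          funext t; simp [Nat.sub_self]
        rw [hfun]
        exact h1
      · intro k hk
        have hfun : (fun t : ℝ => (t : ℂ) ^ (p - p) * f t) = f := by
          funext t; simp [Nat.sub_self]
        rw [hfun]
        exact h3' k hk
    have hstep : ∀ q, q + 1 ≤ p → S (q + 1) → S q := by
      rintro q hq ⟨hA, hB⟩
      have hfeq : (fun t : ℝ => (t : ℂ) ^ (p - q) * f t)
          = (fun t : ℝ => (t : ℂ) * ((t : ℂ) ^ (p - (q+1)) * f t)) := by
        funext t
        rw [← mul_assoc, ← pow_succ']
        congr 2
        omega
      have hwJ : ContDiffOn ℝ m (fun t : ℝ => (t : ℂ) ^ (p - (q+1)) * f t)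
          (Ioo a b \ {0}) :=
        ((Stmt8Aux.contDiff_ofReal.pow (p - (q+1))).contDiffOn).mul h2
      constructor
      · -- regularity via mul_step
        have hw2 : ContDiffOn ℝ ((m - (q+1) : ℕ) + 1)
            (fun t : ℝ => (t : ℂ) ^ (p - (q+1)) * f t) (Ioo a b \ {0}) := by
          refine hwJ.of_le ?_
          have harith : (m - (q+1)) + 1 ≤ m := by omega
          exact_mod_cast harith
        obtain ⟨L, hL⟩ := hB 1 (by omega)
        have hlim : ∃ L : ℂ, Tendsto
            (fun t : ℝ => (t : ℂ) *
              iteratedDeriv ((m - (q+1)) + 1) (fun t : ℝ => (t : ℂ) ^ (p - (q+1)) * f t) t)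
            (𝓝[Ioo a b \ {0}] 0) (𝓝 L) := by
          refine ⟨L, hL.congr (fun x => ?_)⟩
          rw [pow_one]
        have hms := Stmt8Aux.mul_step ha hb hA hw2 hlim
        rw [← hfeq] at hms
        have hcast : ((m - q : ℕ) : WithTop ℕ∞) = ((m - (q+1) : ℕ) : WithTop ℕ∞) + 1 := by
          rw [show m - q = (m - (q+1)) + 1 from by omega]
          push_cast
          ring
        rw [hcast]
        exact_mod_cast hms
      · -- limits
        intro k hk
        obtain ⟨L1, hL1⟩ := hB (k+1) (by omega)
        obtain ⟨L2, hL2⟩ := hB k (by omega)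
        set r : ℕ := m - q + k with hr
        rw [show m - (q+1) + (k+1) = r from by omega] at hL1
        rw [show m - (q+1) + k = r - 1 from by omega] at hL2
        have hid := Stmt8Aux.itd_mul hJ hwJ r (by omega)
        refine ⟨L1 + (r : ℂ) * L2, ?_⟩
        refine Filter.Tendsto.congr' ?_ (hL1.add (hL2.const_mul ((r : ℕ) : ℂ)))
        refine Filter.eventuallyEq_of_mem self_mem_nhdsWithin (fun x hx => ?_)
        rw [hfeq, hid x hx]
        push_cast
        ring
    have hdown : ∀ d, d ≤ p → S (p - d) := by
      intro d
      induction d with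
      | zero => intro _; simpa using hSp
      | succ d ihd =>
        intro hd1
        have hprev : S (p - d) := ihd (by omega)
        have heq : p - (d+1) + 1 = p - d := by omega
        refine hstep (p - (d+1)) (by omega) ?_
        rw [heq]
        exact hprev
    have hS0 : S 0 := by
      have := hdown p le_rfl
      simpa using this
    have hgoal := hS0.1
    have hfun : (fun t : ℝ => (t : ℂ) ^ (p - 0) * f t)
        = fun t : ℝ => (t : ℂ) ^ p * f t := by norm_num
    rw [hfun] at hgoal
    have harith : m - 0 = m := by omega
    rw [harith] at hgoal
    exact hgoal
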